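/- Let P, Q ∈ H_n be rank-k orthogonal projections with 1 ≤ k < n. Then span_ℝ S(P) = span_ℝ S(Q) if and only if P = Q, or n = 2k and P = I − Q. -/

import Mathlib

open Matrix

/-- `P` is an orthogonal projection of rank `k`. -/
def IsProjOfRank {m : Type*} [Fintype m] [DecidableEq m]
    (P : Matrix m m ℂ) (k : ℕ) : Prop :=
  P * P = P ∧ Pᴴ = P ∧ P.rank = k

/-- The `k`-numerical range `W_k(A) = { tr (A P) : P an orthogonal projection of rank k }`. -/
def WK {m : Type*} [Fintype m] [DecidableEq m] (k : ℕ) (A : Matrix m m ℂ) : Set ℂ :=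
  {z | ∃ P : Matrix m m ℂ, IsProjOfRank P k ∧ z = (A * P).trace}

/-- The `k`-numerical radius `w_k(A) = max { |tr (A P)| : P a rank-k orthogonal projection }`. -/
noncomputable def wk {m : Type*} [Fintype m] [DecidableEq m] (k : ℕ) (A : Matrix m m ℂ) : ℝ :=
  sSup {r : ℝ | ∃ P : Matrix m m ℂ, IsProjOfRank P k ∧ r = ‖(A * P).trace‖}

/-- `A` and `B` are parallel with respect to the `k`-numerical radius. -/
noncomputable def ParallelWk {m : Type*} [Fintype m] [DecidableEq m]
    (k : ℕ) (A B : Matrix m m ℂ) : Prop :=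
  ∃ μ : ℂ, ‖μ‖ = 1 ∧ wk k (A + μ • B) = wk k A + wk k B

/-- Sum of the `k` largest eigenvalues of a Hermitian matrix (`0` if not Hermitian). -/
noncomputable def sumKLargest {m : Type*} [Fintype m] [DecidableEq m]
    (k : ℕ) (A : Matrix m m ℂ) : ℝ :=
  if h : A.IsHermitian then
    sSup {r : ℝ | ∃ s : Finset m, s.card = k ∧ r = ∑ i ∈ s, h.eigenvalues i}
  else 0

/-- Sum of the `k` smallest eigenvalues of a Hermitian matrix (`0` if not Hermitian). -/
noncomputable def sumKSmallest {m : Type*} [Fintype m] [DecidableEq m]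
    (k : ℕ) (A : Matrix m m ℂ) : ℝ :=
  if h : A.IsHermitian then
    sInf {r : ℝ | ∃ s : Finset m, s.card = k ∧ r = ∑ i ∈ s, h.eigenvalues i}
  else 0

namespace Stmt16Aux

variable {n k : ℕ}

/-- real diagonal matrix over ℂ -/
noncomputable def Dg (d : Fin n → ℝ) : Matrix (Fin n) (Fin n) ℂ :=
  diagonal (fun i => (d i : ℂ))

noncomputable def indic (s : Finset (Fin n)) : Fin n → ℝ := fun i => if i ∈ s then 1 else 0

lemma Dg_conjTranspose (d : Fin n → ℝ) : (Dg d)ᴴ = Dg d := by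
  have h : (star fun i => ((d i : ℂ))) = fun i => ((d i : ℂ)) := by
    funext i
    simp [Complex.conj_ofReal]
  rw [Dg, diagonal_conjTranspose, h]

lemma Dg_mul_Dg (d e : Fin n → ℝ) : Dg d * Dg e = Dg (fun i => d i * e i) := by
  simp only [Dg, diagonal_mul_diagonal]
  congr 1
  ext i
  push_cast
  ring

lemma trace_Dg (d : Fin n → ℝ) : (Dg d).trace = ((∑ i, d i : ℝ) : ℂ) := by
  simp [Dg, trace_diagonal]

section unitary

variable {V : Matrix (Fin n) (Fin n) ℂ}

lemma hV1 (hV : V ∈ unitaryGroup (Fin n) ℂ) : V * Vᴴ = 1 := by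
  rw [← star_eq_conjTranspose]; exact (mem_unitaryGroup_iff).mp hV

lemma hV2 (hV : V ∈ unitaryGroup (Fin n) ℂ) : Vᴴ * V = 1 := by
  rw [← star_eq_conjTranspose]; exact (mem_unitaryGroup_iff').mp hV

lemma conj_isHermitian (hV : V ∈ unitaryGroup (Fin n) ℂ) (d : Fin n → ℝ) : (V * Dg d * Vᴴ).IsHermitian := by
  show _ = _
  rw [conjTranspose_mul, conjTranspose_mul, Dg_conjTranspose, conjTranspose_conjTranspose,
    mul_assoc]

lemma conj_mul_conj (hV : V ∈ unitaryGroup (Fin n) ℂ) (d e : Fin n → ℝ) :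
    (V * Dg d * Vᴴ) * (V * Dg e * Vᴴ) = V * Dg (fun i => d i * e i) * Vᴴ := by
  rw [← Dg_mul_Dg]
  calc (V * Dg d * Vᴴ) * (V * Dg e * Vᴴ) = V * Dg d * (Vᴴ * V) * Dg e * Vᴴ := by
        simp only [mul_assoc]
    _ = V * (Dg d * Dg e) * Vᴴ := by rw [hV2 hV]; simp only [mul_one, mul_assoc]

lemma trace_conj (hV : V ∈ unitaryGroup (Fin n) ℂ) (d : Fin n → ℝ) : (V * Dg d * Vᴴ).trace = ((∑ i, d i : ℝ) : ℂ) := by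
  rw [trace_mul_cycle, hV2 hV, one_mul, trace_Dg]

lemma trace_conj_mul_conj (hV : V ∈ unitaryGroup (Fin n) ℂ) (d e : Fin n → ℝ) :
    ((V * Dg d * Vᴴ) * (V * Dg e * Vᴴ)).trace = ((∑ i, d i * e i : ℝ) : ℂ) := by
  rw [conj_mul_conj hV, trace_conj hV]

end unitary

lemma sum_indic (s : Finset (Fin n)) : ∑ i, indic s i = s.card := by
  simp [indic]

lemma sum_mul_indic (d : Fin n → ℝ) (s : Finset (Fin n)) :
    ∑ i, d i * indic s i = ∑ i ∈ s, d i := by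
  rw [Finset.sum_congr rfl (fun i _ => by rw [indic, mul_ite, mul_one, mul_zero])]
  simp [Finset.sum_ite_mem]

lemma eigenvalues_proj {R : Matrix (Fin n) (Fin n) ℂ} (h1 : R * R = R) (hH : R.IsHermitian)
    (i : Fin n) : hH.eigenvalues i = 0 ∨ hH.eigenvalues i = 1 := by
  have hd : star (hH.eigenvectorUnitary : Matrix (Fin n) (Fin n) ℂ) * R * (hH.eigenvectorUnitary : Matrix (Fin n) (Fin n) ℂ)
      = diagonal (RCLike.ofReal ∘ hH.eigenvalues) := by
    have := hH.conjStarAlgAut_star_eigenvectorUnitary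
    rwa [Unitary.conjStarAlgAut_star_apply] at this
  set U : Matrix (Fin n) (Fin n) ℂ := (hH.eigenvectorUnitary : Matrix (Fin n) (Fin n) ℂ) with hU
  have hUU : U * star U = 1 := (mem_unitaryGroup_iff).mp (hH.eigenvectorUnitary).2
  have hsq : (star U * R * U) * (star U * R * U) = star U * (R * R) * U := by
    calc (star U * R * U) * (star U * R * U) = star U * R * (U * star U) * R * U := by
          simp only [mul_assoc]
      _ = star U * (R * R) * U := by rw [hUU]; simp only [mul_one, mul_assoc]
  rw [h1, hd, diagonal_mul_diagonal] at hsq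
  have h3 : (hH.eigenvalues i : ℂ) * (hH.eigenvalues i : ℂ) = (hH.eigenvalues i : ℂ) := by
    have := congrArg (fun M => M i i) hsq
    simpa [diagonal_apply_eq, RCLike.ofReal] using this
  have h4 : (hH.eigenvalues i) * (hH.eigenvalues i) = hH.eigenvalues i := by
    exact_mod_cast h3
  rcases mul_eq_zero.mp (show hH.eigenvalues i * (hH.eigenvalues i - 1) = 0 by nlinarith [h4])
    with h | h
  · left; exact h
  · right; linarith

lemma trace_eq_rank_of_proj {R : Matrix (Fin n) (Fin n) ℂ} (h1 : R * R = R) (h2 : Rᴴ = R) :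
    R.trace = (R.rank : ℂ) := by
  have hH : R.IsHermitian := h2
  have htr : R.trace = ∑ i, (hH.eigenvalues i : ℂ) := by
    conv_lhs => rw [hH.spectral_theorem, Unitary.conjStarAlgAut_apply]
    rw [trace_mul_cycle]
    rw [show (star (hH.eigenvectorUnitary : Matrix (Fin n) (Fin n) ℂ)) *
        (hH.eigenvectorUnitary : Matrix (Fin n) (Fin n) ℂ) = 1 from
      (mem_unitaryGroup_iff').mp (hH.eigenvectorUnitary).2, one_mul, trace_diagonal]
    rfl
  have hrank : R.rank = (Finset.univ.filter (fun i => hH.eigenvalues i ≠ 0)).card := by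
    rw [hH.rank_eq_card_non_zero_eigs, Fintype.card_subtype]
  rw [htr, hrank]
  rw [show ∑ i, (hH.eigenvalues i : ℂ) =
      ∑ i, (if hH.eigenvalues i ≠ 0 then (1 : ℂ) else 0) from
    Finset.sum_congr rfl fun i _ => by
      rcases eigenvalues_proj h1 hH i with h | h <;> simp [h]]
  rw [Finset.sum_ite, Finset.sum_const_zero, add_zero, Finset.sum_const, nsmul_eq_mul, mul_one]

lemma indic_mul_indic (s : Finset (Fin n)) (i : Fin n) :
    indic s i * indic s i = indic s i := by
  rw [indic]; split_ifs <;> norm_num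

lemma isProjOfRank_conj {V : Matrix (Fin n) (Fin n) ℂ} (hV : V ∈ unitaryGroup (Fin n) ℂ)
    (s : Finset (Fin n)) : IsProjOfRank (V * Dg (indic s) * Vᴴ) s.card := by
  have h1 : (V * Dg (indic s) * Vᴴ) * (V * Dg (indic s) * Vᴴ) = V * Dg (indic s) * Vᴴ := by
    rw [conj_mul_conj hV,
      show (fun i => indic s i * indic s i) = indic s from funext fun i => indic_mul_indic s i]
  have h2 : (V * Dg (indic s) * Vᴴ)ᴴ = V * Dg (indic s) * Vᴴ := conj_isHermitian hV _
  refine ⟨h1, h2, ?_⟩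
  have h3 := trace_eq_rank_of_proj h1 h2
  rw [trace_conj hV, sum_indic] at h3
  exact_mod_cast h3.symm

/-- diagonal entries of the compression of a projection: the key numbers `c i`. -/
lemma proj_compression {V R : Matrix (Fin n) (Fin n) ℂ} (hV : V ∈ unitaryGroup (Fin n) ℂ)
    (hR : IsProjOfRank R k) :
    (∀ i j, (Vᴴ * R * V) j i = star ((Vᴴ * R * V) i j)) ∧
    (∀ i, (Vᴴ * R * V) i i = (((Vᴴ * R * V) i i).re : ℂ)) ∧
    (∀ i, 0 ≤ ((Vᴴ * R * V) i i).re ∧ ((Vᴴ * R * V) i i).re ≤ 1) ∧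
    (∑ i, ((Vᴴ * R * V) i i).re) = k ∧
    (Vᴴ * R * V) * (Vᴴ * R * V) = Vᴴ * R * V := by
  obtain ⟨hR1, hR2, hR3⟩ := hR
  set M := Vᴴ * R * V with hM
  have hMh : Mᴴ = M := by
    rw [hM, conjTranspose_mul, conjTranspose_mul, hR2, conjTranspose_conjTranspose, mul_assoc]
  have hMi : M * M = M := by
    rw [hM]
    calc (Vᴴ * R * V) * (Vᴴ * R * V) = Vᴴ * R * (V * Vᴴ) * R * V := by simp only [mul_assoc]
      _ = Vᴴ * (R * R) * V := by rw [hV1 hV]; simp only [mul_one, mul_assoc]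
      _ = Vᴴ * R * V := by rw [hR1, mul_assoc]
  have hsym : ∀ i j, M j i = star (M i j) := by
    intro i j
    conv_lhs => rw [← hMh]
    simp [conjTranspose_apply]
  have hdiag : ∀ i, M i i = ((M i i).re : ℂ) := by
    intro i
    have h2 : (starRingEnd ℂ) (M i i) = M i i := by
      rw [← RCLike.star_def]; exact (hsym i i).symm
    exact (Complex.conj_eq_iff_re.mp h2).symm
  have hpos : ∀ (S : Matrix (Fin n) (Fin n) ℂ), S * S = S → Sᴴ = S →
      ∀ i, 0 ≤ ((Vᴴ * S * V) i i).re := by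
    intro S hS1 hS2 i
    have keyM : Vᴴ * S * V = (S * V)ᴴ * (S * V) := by
      calc Vᴴ * S * V = Vᴴ * (S * S) * V := by rw [hS1]
        _ = (S * V)ᴴ * (S * V) := by
            rw [conjTranspose_mul, hS2]
            simp only [mul_assoc]
    rw [keyM, mul_apply]
    simp only [conjTranspose_apply, RCLike.star_def, ← Complex.normSq_eq_conj_mul_self]
    rw [← Complex.ofReal_sum, Complex.ofReal_re]
    exact Finset.sum_nonneg fun j _ => Complex.normSq_nonneg _
  have h01 : ∀ i, 0 ≤ (M i i).re ∧ (M i i).re ≤ 1 := by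
    intro i
    constructor
    · exact hpos R hR1 hR2 i
    · have h1R : (1 - R) * (1 - R) = 1 - R := by
        rw [mul_sub, sub_mul, sub_mul, hR1]
        simp only [mul_one, one_mul]
        abel
      have h1R2 : (1 - R)ᴴ = 1 - R := by
        rw [conjTranspose_sub, hR2, conjTranspose_one]
      have := hpos (1 - R) h1R h1R2 i
      have hexp : Vᴴ * (1 - R) * V = 1 - M := by
        rw [hM, mul_sub, sub_mul, mul_one, hV2 hV]
      rw [hexp] at this
      have : 0 ≤ ((1 : Matrix (Fin n) (Fin n) ℂ) i i).re - (M i i).re := by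
        simpa [Matrix.sub_apply] using this
      simp only [one_apply_eq, Complex.one_re] at this
      linarith
  have hsum : (∑ i, (M i i).re) = k := by
    have htr : M.trace = (k : ℂ) := by
      rw [hM, trace_mul_cycle, hV1 hV, one_mul]
      rw [trace_eq_rank_of_proj hR1 hR2, hR3]
    have : (∑ i, M i i) = (k : ℂ) := htr
    calc (∑ i, (M i i).re) = (∑ i, M i i).re := by rw [Complex.re_sum]
      _ = (k : ℝ) := by rw [this]; simp
  exact ⟨hsym, hdiag, h01, hsum, hMi⟩

/-- trace formula: tr((V Dg d Vᴴ) R) = ∑ d i * c i -/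
lemma trace_conj_mul_proj {V R : Matrix (Fin n) (Fin n) ℂ} (hV : V ∈ unitaryGroup (Fin n) ℂ)
    (hR : IsProjOfRank R k) (d : Fin n → ℝ) :
    ((V * Dg d * Vᴴ) * R).trace = ((∑ i, d i * ((Vᴴ * R * V) i i).re : ℝ) : ℂ) := by
  obtain ⟨-, hdiag, -, -, -⟩ := proj_compression hV hR
  have h1 : (V * Dg d * Vᴴ) * R = V * Dg d * (Vᴴ * R) := by simp only [mul_assoc]
  rw [h1, trace_mul_cycle, Matrix.trace]
  simp only [diag_apply, Dg, mul_diagonal]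
  rw [show (∑ x : Fin n, (Vᴴ * R * V) x x * (d x : ℂ))
      = ∑ x : Fin n, ((d x * ((Vᴴ * R * V) x x).re : ℝ) : ℂ) from
    Finset.sum_congr rfl fun x _ => by
      rw [hdiag x]; simp only [Complex.ofReal_re]; push_cast; ring]
  rw [Complex.ofReal_sum]

lemma exists_topk (d : Fin n → ℝ) (hkn : k ≤ n) :
    ∃ s : Finset (Fin n), s.card = k ∧ ∀ i ∈ s, ∀ j, j ∉ s → d j ≤ d i := by
  have hne : ((Finset.univ : Finset (Fin n)).powersetCard k).Nonempty := by
    rw [Finset.powersetCard_nonempty]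
    simpa using hkn
  obtain ⟨s, hs, hmax⟩ := Finset.exists_max_image _ (fun t => ∑ i ∈ t, d i) hne
  rw [Finset.mem_powersetCard_univ] at hs
  refine ⟨s, hs, ?_⟩
  intro i hi j hj
  by_contra hlt
  push_neg at hlt
  have hjs : j ∉ s.erase i := fun h => hj (Finset.mem_of_mem_erase h)
  have hkpos : 0 < k := hs ▸ Finset.card_pos.mpr ⟨i, hi⟩
  have hcard : (insert j (s.erase i)).card = k := by
    rw [Finset.card_insert_of_notMem hjs, Finset.card_erase_of_mem hi, hs]
    omega
  have hle := hmax (insert j (s.erase i)) (Finset.mem_powersetCard_univ.mpr hcard)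
  have herase : ∑ x ∈ s.erase i, d x + d i = ∑ x ∈ s, d x := Finset.sum_erase_add s d hi
  rw [Finset.sum_insert hjs] at hle
  linarith

lemma lp_key (d c : Fin n → ℝ) (s : Finset (Fin n)) (θ : ℝ) (hcs : ∑ i, c i = s.card) :
    ∑ i ∈ s, ((d i - θ) * (1 - c i)) + ∑ i ∈ sᶜ, ((θ - d i) * c i)
      = ∑ i ∈ s, d i - ∑ i, d i * c i := by
  have h1 := Finset.sum_add_sum_compl s (fun i => d i * c i)
  have h2 := Finset.sum_add_sum_compl s c
  have e1 : ∑ i ∈ s, ((d i - θ) * (1 - c i))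
      = ∑ i ∈ s, d i - ∑ i ∈ s, (d i * c i) - θ * s.card + θ * ∑ i ∈ s, c i := by
    simp only [sub_mul, mul_sub, mul_one, Finset.sum_sub_distrib, Finset.mul_sum,
      Finset.sum_const, nsmul_eq_mul]
    ring
  have e2 : ∑ i ∈ sᶜ, ((θ - d i) * c i) = θ * ∑ i ∈ sᶜ, c i - ∑ i ∈ sᶜ, (d i * c i) := by
    simp only [sub_mul, Finset.sum_sub_distrib, Finset.mul_sum]
  have h3 : θ * (∑ i ∈ s, c i) + θ * (∑ i ∈ sᶜ, c i) = θ * s.card := by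
    rw [← mul_add, h2, hcs]
  rw [e1, e2]
  linarith

lemma lp_upper (d c : Fin n → ℝ) (s : Finset (Fin n)) (θ : ℝ)
    (hc0 : ∀ i, 0 ≤ c i) (hc1 : ∀ i, c i ≤ 1) (hcs : ∑ i, c i = s.card)
    (hθs : ∀ i ∈ s, θ ≤ d i) (hθc : ∀ j, j ∉ s → d j ≤ θ) :
    ∑ i, d i * c i ≤ ∑ i ∈ s, d i := by
  have hkey := lp_key d c s θ hcs
  have t1 : 0 ≤ ∑ i ∈ s, ((d i - θ) * (1 - c i)) :=
    Finset.sum_nonneg fun i hi => mul_nonneg (by linarith [hθs i hi]) (by linarith [hc1 i])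
  have t2 : 0 ≤ ∑ i ∈ sᶜ, ((θ - d i) * c i) :=
    Finset.sum_nonneg fun i hi =>
      mul_nonneg (by linarith [hθc i (Finset.mem_compl.mp hi)]) (hc0 i)
  linarith

lemma lp_eq (d c : Fin n → ℝ) (s : Finset (Fin n)) (θ : ℝ)
    (hc0 : ∀ i, 0 ≤ c i) (hc1 : ∀ i, c i ≤ 1) (hcs : ∑ i, c i = s.card)
    (hθs : ∀ i ∈ s, θ ≤ d i) (hθc : ∀ j, j ∉ s → d j ≤ θ)
    (heq : ∑ i, d i * c i = ∑ i ∈ s, d i) :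
    ∀ i, (θ < d i → c i = 1) ∧ (d i < θ → c i = 0) := by
  have hkey := lp_key d c s θ hcs
  have t1 : 0 ≤ ∑ i ∈ s, ((d i - θ) * (1 - c i)) :=
    Finset.sum_nonneg fun i hi => mul_nonneg (by linarith [hθs i hi]) (by linarith [hc1 i])
  have t2 : 0 ≤ ∑ i ∈ sᶜ, ((θ - d i) * c i) :=
    Finset.sum_nonneg fun i hi =>
      mul_nonneg (by linarith [hθc i (Finset.mem_compl.mp hi)]) (hc0 i)
  have z1 : ∑ i ∈ s, ((d i - θ) * (1 - c i)) = 0 := by linarith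
  have z2 : ∑ i ∈ sᶜ, ((θ - d i) * c i) = 0 := by linarith
  have e1 := (Finset.sum_eq_zero_iff_of_nonneg
    (fun i hi => mul_nonneg (by linarith [hθs i hi]) (by linarith [hc1 i]))).mp z1
  have e2 := (Finset.sum_eq_zero_iff_of_nonneg
    (fun i hi => mul_nonneg (by linarith [hθc i (Finset.mem_compl.mp hi)]) (hc0 i))).mp z2
  intro i
  constructor
  · intro hθi
    have his : i ∈ s := by
      by_contra h
      exact absurd (hθc i h) (not_le.mpr hθi)
    have := e1 i his
    rcases mul_eq_zero.mp this with h | h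
    · exfalso; linarith
    · linarith
  · intro hiθ
    have his : i ∉ s := fun h => absurd (hθs i h) (not_le.mpr hiθ)
    have := e2 i (Finset.mem_compl.mpr his)
    rcases mul_eq_zero.mp this with h | h
    · exfalso; linarith
    · exact h

lemma abs_trace_le {V R : Matrix (Fin n) (Fin n) ℂ} (hV : V ∈ unitaryGroup (Fin n) ℂ)
    (d : Fin n → ℝ) (hR : IsProjOfRank R k) :
    ‖((V * Dg d * Vᴴ) * R).trace‖ ≤ ∑ i, |d i| := by
  rw [trace_conj_mul_proj hV hR d, Complex.norm_real, Real.norm_eq_abs]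
  obtain ⟨-, -, h01, -, -⟩ := proj_compression hV hR
  calc |∑ i, d i * ((Vᴴ * R * V) i i).re| ≤ ∑ i, |d i * ((Vᴴ * R * V) i i).re| :=
        Finset.abs_sum_le_sum_abs _ _
    _ ≤ ∑ i, |d i| := Finset.sum_le_sum fun i _ => by
        rw [abs_mul]
        have h1 := (h01 i).1
        have h2 := (h01 i).2
        nlinarith [abs_nonneg (d i), abs_of_nonneg h1]

lemma wk_set_bddAbove {V : Matrix (Fin n) (Fin n) ℂ} (hV : V ∈ unitaryGroup (Fin n) ℂ)
    (d : Fin n → ℝ) :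
    BddAbove {r : ℝ | ∃ R : Matrix (Fin n) (Fin n) ℂ,
      IsProjOfRank R k ∧ r = ‖((V * Dg d * Vᴴ) * R).trace‖} :=
  ⟨∑ i, |d i|, by rintro r ⟨R, hR, rfl⟩; exact abs_trace_le hV d hR⟩

lemma wk_eq {V : Matrix (Fin n) (Fin n) ℂ} (hV : V ∈ unitaryGroup (Fin n) ℂ)
    (d : Fin n → ℝ) (s : Finset (Fin n)) (hsk : s.card = k) (hsne : s.Nonempty)
    (h0 : ∀ i ∈ s, 0 ≤ d i) (hdom : ∀ i ∈ s, ∀ j, j ∉ s → |d j| ≤ d i) :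
    wk k (V * Dg d * Vᴴ) = ∑ i ∈ s, d i := by
  obtain ⟨i₀, hi₀, hmin⟩ := Finset.exists_min_image s d hsne
  have hproj : IsProjOfRank (V * Dg (indic s) * Vᴴ) k := by
    rw [← hsk]; exact isProjOfRank_conj hV s
  have hval : ‖((V * Dg d * Vᴴ) * (V * Dg (indic s) * Vᴴ)).trace‖ = ∑ i ∈ s, d i := by
    rw [trace_conj_mul_conj hV, Complex.norm_real, Real.norm_eq_abs, sum_mul_indic,
      abs_of_nonneg (Finset.sum_nonneg h0)]
  apply le_antisymm
  · apply csSup_le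
    · exact ⟨_, ⟨_, hproj, rfl⟩⟩
    · rintro r ⟨R, hR, rfl⟩
      rw [trace_conj_mul_proj hV hR d, Complex.norm_real, Real.norm_eq_abs]
      set c : Fin n → ℝ := fun i => ((Vᴴ * R * V) i i).re with hc
      obtain ⟨-, -, h01, hsum, -⟩ := proj_compression hV hR
      have hc0 : ∀ i, 0 ≤ c i := fun i => (h01 i).1
      have hc1 : ∀ i, c i ≤ 1 := fun i => (h01 i).2
      have hcs : ∑ i, c i = s.card := by rw [hsk]; exact hsum
      have hub : ∑ i, d i * c i ≤ ∑ i ∈ s, d i :=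
        lp_upper d c s (d i₀) hc0 hc1 hcs hmin
          (fun j hj => le_trans (le_abs_self _) (hdom i₀ hi₀ j hj))
      have hlb : -(∑ i ∈ s, d i) ≤ ∑ i, d i * c i := by
        have h1 : ∀ i, -(d i * c i) ≤ d i₀ * c i := by
          intro i
          by_cases hi : i ∈ s
          · nlinarith [h0 i hi, hc0 i, h0 i₀ hi₀]
          · have habs : |d i| ≤ d i₀ := hdom i₀ hi₀ i hi
            nlinarith [hc0 i, neg_abs_le (d i), le_abs_self (d i)]
        have h2 : ∑ i, -(d i * c i) ≤ ∑ i, d i₀ * c i := Finset.sum_le_sum fun i _ => h1 i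
        have h3 : ∑ i, d i₀ * c i = d i₀ * k := by rw [← Finset.mul_sum, hsum]
        have h4 : d i₀ * k ≤ ∑ i ∈ s, d i := by
          calc d i₀ * k = ∑ _i ∈ s, d i₀ := by
                rw [Finset.sum_const, hsk, nsmul_eq_mul, mul_comm]
            _ ≤ ∑ i ∈ s, d i := Finset.sum_le_sum hmin
        rw [Finset.sum_neg_distrib] at h2
        linarith
      rw [abs_le]
      exact ⟨by linarith, hub⟩
  · exact le_csSup (wk_set_bddAbove hV d) ⟨_, hproj, hval.symm⟩

/-- `V Dg d Vᴴ` belongs to `S(V Dg (indic s) Vᴴ)`. -/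
lemma mem_S {V : Matrix (Fin n) (Fin n) ℂ} (hV : V ∈ unitaryGroup (Fin n) ℂ)
    (d : Fin n → ℝ) (s : Finset (Fin n)) (hsk : s.card = k) (hsne : s.Nonempty)
    (h0 : ∀ i ∈ s, 0 ≤ d i) (hdom : ∀ i ∈ s, ∀ j, j ∉ s → |d j| ≤ d i) :
    ((V * Dg d * Vᴴ) * (V * Dg (indic s) * Vᴴ)).trace = ((wk k (V * Dg d * Vᴴ) : ℝ) : ℂ) := by
  rw [trace_conj_mul_conj hV, sum_mul_indic, wk_eq hV d s hsk hsne h0 hdom]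

lemma spectral {B : Matrix (Fin n) (Fin n) ℂ} (hB : B.IsHermitian) :
    B = (hB.eigenvectorUnitary : Matrix (Fin n) (Fin n) ℂ) * Dg hB.eigenvalues *
      (hB.eigenvectorUnitary : Matrix (Fin n) (Fin n) ℂ)ᴴ := by
  conv_lhs => rw [hB.spectral_theorem, Unitary.conjStarAlgAut_apply]
  rw [star_eq_conjTranspose]
  rfl

lemma proj_row {M : Matrix (Fin n) (Fin n) ℂ} (hMi : M * M = M)
    (hsym : ∀ i j, M j i = star (M i j)) (i : Fin n) :
    ((M i i).re = 1 → ∀ j, j ≠ i → M i j = 0) ∧ ((M i i).re = 0 → ∀ j, M i j = 0) := by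
  have hdiagval : M i i = ((M i i).re : ℂ) := by
    have h2 : (starRingEnd ℂ) (M i i) = M i i := by
      rw [← RCLike.star_def]; exact (hsym i i).symm
    exact (Complex.conj_eq_iff_re.mp h2).symm
  have key : (M i i).re = ∑ j, Complex.normSq (M i j) := by
    have h1 : M i i = ∑ j, M i j * M j i := by rw [← mul_apply, hMi]
    have h2 : M i i = ∑ j, ((Complex.normSq (M i j) : ℝ) : ℂ) := by
      rw [h1]
      refine Finset.sum_congr rfl fun j _ => ?_
      rw [hsym i j, RCLike.star_def, Complex.mul_conj]
    rw [h2, ← Complex.ofReal_sum, Complex.ofReal_re]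
  have hdsq : Complex.normSq (M i i) = (M i i).re * (M i i).re := by
    rw [hdiagval]
    simp [Complex.normSq_ofReal]
  have hsplit : ∑ j, Complex.normSq (M i j)
      = Complex.normSq (M i i) + ∑ j ∈ Finset.univ.erase i, Complex.normSq (M i j) :=
    (Finset.add_sum_erase _ _ (Finset.mem_univ i)).symm
  constructor
  · intro h1 j hj
    have hz : ∑ j ∈ Finset.univ.erase i, Complex.normSq (M i j) = 0 := by
      have e := key.trans hsplit
      rw [hdsq, h1] at e
      linarith
    have := (Finset.sum_eq_zero_iff_of_nonneg
      (fun j _ => Complex.normSq_nonneg _)).mp hz j (Finset.mem_erase.mpr ⟨hj, Finset.mem_univ j⟩)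
    exact Complex.normSq_eq_zero.mp this
  · intro h0 j
    by_cases hj : j = i
    · subst hj
      rw [hdiagval, h0, Complex.ofReal_zero]
    · have hz : ∑ j ∈ Finset.univ.erase i, Complex.normSq (M i j) = 0 := by
        have e := key.trans hsplit
        rw [hdsq, h0] at e
        linarith
      have := (Finset.sum_eq_zero_iff_of_nonneg
        (fun j _ => Complex.normSq_nonneg _)).mp hz j (Finset.mem_erase.mpr ⟨hj, Finset.mem_univ j⟩)
      exact Complex.normSq_eq_zero.mp this

lemma conj_mul_conj' {U : Matrix (Fin n) (Fin n) ℂ} (hU : U ∈ unitaryGroup (Fin n) ℂ)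
    (X Y : Matrix (Fin n) (Fin n) ℂ) :
    (U * X * Uᴴ) * (U * Y * Uᴴ) = U * (X * Y) * Uᴴ := by
  calc (U * X * Uᴴ) * (U * Y * Uᴴ) = U * X * (Uᴴ * U) * Y * Uᴴ := by simp only [mul_assoc]
    _ = U * (X * Y) * Uᴴ := by rw [hV2 hU]; simp only [mul_one, mul_assoc]

lemma commute_of_mem_S (hk : 1 ≤ k) (hkn : k ≤ n) {B R : Matrix (Fin n) (Fin n) ℂ}
    (hB : B.IsHermitian) (hR : IsProjOfRank R k)
    (h : (B * R).trace = ((wk k B : ℝ) : ℂ)) : B * R = R * B := by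
  set U : Matrix (Fin n) (Fin n) ℂ := (hB.eigenvectorUnitary : Matrix (Fin n) (Fin n) ℂ)
    with hU
  have hUu : U ∈ unitaryGroup (Fin n) ℂ := (hB.eigenvectorUnitary).2
  set lam := hB.eigenvalues with hlam
  have hBspec : B = U * Dg lam * Uᴴ := spectral hB
  obtain ⟨s, hsk, hdom⟩ := exists_topk (k := k) lam hkn
  have hsne : s.Nonempty := Finset.card_pos.mp (by rw [hsk]; exact hk)
  obtain ⟨i₀, hi₀, hmin⟩ := Finset.exists_min_image s lam hsne
  set c : Fin n → ℝ := fun i => ((Uᴴ * R * U) i i).re with hc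
  obtain ⟨hsym, hdiag, h01, hsum, hMi⟩ := proj_compression hUu hR
  have htr' : ∑ i, lam i * c i = wk k B := by
    have htr : ((∑ i, lam i * c i : ℝ) : ℂ) = ((wk k B : ℝ) : ℂ) := by
      rw [← trace_conj_mul_proj hUu hR lam, ← hBspec]; exact h
    exact_mod_cast htr
  have hge : ∑ i ∈ s, lam i ≤ wk k B := by
    have hproj : IsProjOfRank (U * Dg (indic s) * Uᴴ) k := by
      rw [← hsk]; exact isProjOfRank_conj hUu s
    have hval : ((B * (U * Dg (indic s) * Uᴴ)).trace) = ((∑ i ∈ s, lam i : ℝ) : ℂ) := by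
      rw [hBspec, trace_conj_mul_conj hUu, sum_mul_indic]
    have habs : ‖(B * (U * Dg (indic s) * Uᴴ)).trace‖ = |∑ i ∈ s, lam i| := by
      rw [hval, Complex.norm_real, Real.norm_eq_abs]
    have hbdd : BddAbove {r : ℝ | ∃ P : Matrix (Fin n) (Fin n) ℂ,
        IsProjOfRank P k ∧ r = ‖(B * P).trace‖} := by
      rw [hBspec]
      exact wk_set_bddAbove hUu lam
    have hle : |∑ i ∈ s, lam i| ≤ wk k B := le_csSup hbdd ⟨_, hproj, habs.symm⟩
    exact le_trans (le_abs_self _) hle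
  have hcs : ∑ i, c i = s.card := by rw [hsk]; exact hsum
  have hub : ∑ i, lam i * c i ≤ ∑ i ∈ s, lam i :=
    lp_upper lam c s (lam i₀) (fun i => (h01 i).1) (fun i => (h01 i).2) hcs hmin
      (fun j hj => hdom i₀ hi₀ j hj)
  have heq : ∑ i, lam i * c i = ∑ i ∈ s, lam i := le_antisymm hub (by rw [htr']; exact hge)
  have hLP := lp_eq lam c s (lam i₀) (fun i => (h01 i).1) (fun i => (h01 i).2) hcs hmin
    (fun j hj => hdom i₀ hi₀ j hj) heq
  set M : Matrix (Fin n) (Fin n) ℂ := Uᴴ * R * U with hM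
  have hcomm : Dg lam * M = M * Dg lam := by
    ext i j
    rw [Dg, diagonal_mul, mul_diagonal]
    by_cases hij : i = j
    · subst hij; ring
    · by_cases hz : M i j = 0
      · rw [hz]; ring
      · have hlami : lam i = lam i₀ := by
          rcases lt_trichotomy (lam i) (lam i₀) with hlt | heq' | hgt
          · exact absurd ((proj_row hMi hsym i).2 ((hLP i).2 hlt) j) hz
          · exact heq'
          · exact absurd ((proj_row hMi hsym i).1 ((hLP i).1 hgt) j
              (fun hh => hij hh.symm)) hz
        have hlamj : lam j = lam i₀ := by
          have hzji : M j i ≠ 0 := by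
            rw [hsym i j]
            exact star_ne_zero.mpr hz
          rcases lt_trichotomy (lam j) (lam i₀) with hlt | heq' | hgt
          · exact absurd ((proj_row hMi hsym j).2 ((hLP j).2 hlt) i) hzji
          · exact heq'
          · exact absurd ((proj_row hMi hsym j).1 ((hLP j).1 hgt) i hij) hzji
        rw [hlami, hlamj]; ring
  have hRU : R = U * M * Uᴴ := by
    rw [hM]
    calc R = (U * Uᴴ) * R * (U * Uᴴ) := by rw [hV1 hUu]; simp only [one_mul, mul_one]
      _ = U * (Uᴴ * R * U) * Uᴴ := by simp only [mul_assoc]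
  calc B * R = (U * Dg lam * Uᴴ) * (U * M * Uᴴ) := by rw [← hBspec, ← hRU]
    _ = U * (Dg lam * M) * Uᴴ := conj_mul_conj' hUu _ _
    _ = U * (M * Dg lam) * Uᴴ := by rw [hcomm]
    _ = (U * M * Uᴴ) * (U * Dg lam * Uᴴ) := (conj_mul_conj' hUu _ _).symm
    _ = R * B := by rw [← hBspec, ← hRU]

section Wsec

variable {t u : Fin n}

/-- matrix supported on the `{t,u}×{t,u}` block -/
noncomputable def Tm (t u : Fin n) (a b c d : ℂ) : Matrix (Fin n) (Fin n) ℂ :=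
  Matrix.single t t a + Matrix.single t u b + Matrix.single u t c + Matrix.single u u d

lemma Tm_mul (htu : t ≠ u) (a b c d a' b' c' d' : ℂ) :
    Tm t u a b c d * Tm t u a' b' c' d'
      = Tm t u (a*a' + b*c') (a*b' + b*d') (c*a' + d*c') (c*b' + d*d') := by
  have h1 : ∀ (i l : Fin n) (c' d' : ℂ), Matrix.single i t c' * Matrix.single u l d' = 0 :=
    fun i l c' d' => Matrix.single_mul_single_of_ne c' i t u htu d'
  have h2 : ∀ (i l : Fin n) (c' d' : ℂ), Matrix.single i u c' * Matrix.single t l d' = 0 :=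
    fun i l c' d' => Matrix.single_mul_single_of_ne c' i u t htu.symm d'
  simp only [Tm, add_mul, mul_add, Matrix.single_mul_single_same, h1, h2,
    single_add, add_zero, zero_add]
  abel

lemma SB_conjT (i j : Fin n) (c : ℂ) :
    (Matrix.single i j c)ᴴ = Matrix.single j i (star c) := by
  ext a b
  simp only [conjTranspose_apply, Matrix.single, of_apply]
  split_ifs with h1 h2 h2
  · rfl
  · exact absurd ⟨h1.2, h1.1⟩ h2
  · exact absurd ⟨h2.2, h2.1⟩ h1
  · exact star_zero ℂ

lemma Tm_conjT (a b c d : ℂ) :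
    (Tm t u a b c d)ᴴ = Tm t u (star a) (star c) (star b) (star d) := by
  simp only [Tm, conjTranspose_add, SB_conjT]
  abel

lemma diag_mul_SB (f : Fin n → ℂ) (i j : Fin n) (c : ℂ) :
    diagonal f * Matrix.single i j c = Matrix.single i j (f i * c) := by
  ext a b
  rw [diagonal_mul]
  simp only [Matrix.single, of_apply]
  split_ifs with h
  · rw [h.1]
  · exact mul_zero _

lemma SB_mul_diag (f : Fin n → ℂ) (i j : Fin n) (c : ℂ) :
    Matrix.single i j c * diagonal f = Matrix.single i j (c * f j) := by
  ext a b
  rw [mul_diagonal]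
  simp only [Matrix.single, of_apply]
  split_ifs with h
  · rw [h.2]
  · exact zero_mul _

lemma diag_mul_Tm (f : Fin n → ℂ) (a b c d : ℂ) :
    diagonal f * Tm t u a b c d = Tm t u (f t * a) (f t * b) (f u * c) (f u * d) := by
  simp only [Tm, mul_add, diag_mul_SB]

lemma Tm_mul_diag (f : Fin n → ℂ) (a b c d : ℂ) :
    Tm t u a b c d * diagonal f = Tm t u (a * f t) (b * f u) (c * f t) (d * f u) := by
  simp only [Tm, add_mul, SB_mul_diag]

noncomputable def rr : ℂ := ((Real.sqrt 2)⁻¹ : ℝ)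

lemma rr_real : star rr = rr := Complex.conj_ofReal _

lemma rr_sq : rr * rr = 1/2 := by
  have hx : (Real.sqrt 2)⁻¹ * (Real.sqrt 2)⁻¹ = (1:ℝ)/2 := by
    rw [← mul_inv, Real.mul_self_sqrt (by norm_num : (0:ℝ) ≤ 2)]
    norm_num
  rw [rr, ← Complex.ofReal_mul, hx]
  norm_num

/-- the 2×2 rotation supported on `{t,u}` -/
noncomputable def Wm (t u : Fin n) : Matrix (Fin n) (Fin n) ℂ :=
  1 - Tm t u 1 0 0 1 + Tm t u rr rr rr (-rr)

lemma Wm_conjT : (Wm t u)ᴴ = Wm t u := by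
  rw [Wm, conjTranspose_add, conjTranspose_sub, conjTranspose_one, Tm_conjT, Tm_conjT]
  simp [rr_real]

lemma Wm_mul_self (htu : t ≠ u) : Wm t u * Wm t u = 1 := by
  have hFF : Tm t u 1 0 0 1 * Tm t u 1 0 0 1 = Tm t u 1 0 0 1 := by
    rw [Tm_mul htu]; norm_num
  have hFS : Tm t u 1 0 0 1 * Tm t u rr rr rr (-rr) = Tm t u rr rr rr (-rr) := by
    rw [Tm_mul htu]; norm_num
  have hSF : Tm t u rr rr rr (-rr) * Tm t u 1 0 0 1 = Tm t u rr rr rr (-rr) := by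
    rw [Tm_mul htu]; norm_num
  have hSS : Tm t u rr rr rr (-rr) * Tm t u rr rr rr (-rr) = Tm t u 1 0 0 1 := by
    rw [Tm_mul htu]
    rw [show rr*rr + rr*rr = (1:ℂ) from by rw [rr_sq]; norm_num,
      show rr*rr + rr*(-rr) = (0:ℂ) from by ring,
      show rr*rr + (-rr)*rr = (0:ℂ) from by ring,
      show rr*rr + (-rr)*(-rr) = (1:ℂ) from by rw [neg_mul_neg, rr_sq]; norm_num]
  rw [Wm]
  have hexp : (1 - Tm t u 1 0 0 1 + Tm t u rr rr rr (-rr)) *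
      (1 - Tm t u 1 0 0 1 + Tm t u rr rr rr (-rr))
      = 1 - Tm t u 1 0 0 1 - Tm t u 1 0 0 1
        + Tm t u 1 0 0 1 * Tm t u 1 0 0 1
        + Tm t u rr rr rr (-rr) + Tm t u rr rr rr (-rr)
        - Tm t u 1 0 0 1 * Tm t u rr rr rr (-rr)
        - Tm t u rr rr rr (-rr) * Tm t u 1 0 0 1
        + Tm t u rr rr rr (-rr) * Tm t u rr rr rr (-rr) := by
    noncomm_ring
  rw [hexp, hFF, hFS, hSF, hSS]
  abel

lemma Wm_unitary (htu : t ≠ u) : Wm t u ∈ unitaryGroup (Fin n) ℂ := by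
  rw [mem_unitaryGroup_iff, star_eq_conjTranspose, Wm_conjT]
  exact Wm_mul_self htu

lemma Wm_comm_diag (f : Fin n → ℂ) (hf : f t = f u) :
    Wm t u * diagonal f = diagonal f * Wm t u := by
  have h1 : Tm t u 1 0 0 1 * diagonal f = diagonal f * Tm t u 1 0 0 1 := by
    rw [Tm_mul_diag, diag_mul_Tm, hf]
    ring_nf
  have h2 : Tm t u rr rr rr (-rr) * diagonal f = diagonal f * Tm t u rr rr rr (-rr) := by
    rw [Tm_mul_diag, diag_mul_Tm, hf]
    ring_nf
  rw [Wm, add_mul, sub_mul, one_mul, mul_add, mul_sub, mul_one, h1, h2]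

lemma Wm_conj_diag (htu : t ≠ u) (f : Fin n → ℂ) (hf : f t = f u) :
    Wm t u * diagonal f * (Wm t u)ᴴ = diagonal f := by
  rw [Wm_conjT, Wm_comm_diag f hf, mul_assoc, Wm_mul_self htu, mul_one]

lemma Wm_conj_G (htu : t ≠ u) :
    Wm t u * Tm t u 1 0 0 (-1) * (Wm t u)ᴴ = Tm t u 0 1 1 0 := by
  rw [Wm_conjT]
  have hWG : Wm t u * Tm t u 1 0 0 (-1) = Tm t u rr (-rr) rr rr := by
    rw [Wm, add_mul, sub_mul, one_mul, Tm_mul htu, Tm_mul htu]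
    rw [show (1:ℂ)*1 + 0*0 = 1 from by ring, show (1:ℂ)*0 + 0*(-1) = 0 from by ring,
      show (0:ℂ)*1 + 1*0 = 0 from by ring, show (0:ℂ)*0 + 1*(-1) = -1 from by ring,
      show rr*1 + rr*0 = rr from by ring, show rr*0 + rr*(-1) = -rr from by ring,
      show rr*1 + (-rr)*0 = rr from by ring, show rr*0 + (-rr)*(-1) = rr from by ring]
    abel
  rw [hWG]
  have hG1 : Tm t u rr (-rr) rr rr * Tm t u 1 0 0 1 = Tm t u rr (-rr) rr rr := by
    rw [Tm_mul htu]; norm_num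
  have hG2 : Tm t u rr (-rr) rr rr * Tm t u rr rr rr (-rr) = Tm t u 0 1 1 0 := by
    rw [Tm_mul htu]
    rw [show rr*rr + (-rr)*rr = (0:ℂ) from by ring,
      show rr*rr + (-rr)*(-rr) = (1:ℂ) from by rw [neg_mul_neg, rr_sq]; norm_num,
      show rr*rr + rr*rr = (1:ℂ) from by rw [rr_sq]; norm_num,
      show rr*rr + rr*(-rr) = (0:ℂ) from by ring]
  rw [Wm, mul_add, mul_sub, mul_one, hG1, hG2]
  abel

end Wsec

lemma real_smul_mat (r : ℝ) (M : Matrix (Fin n) (Fin n) ℂ) : r • M = (r : ℂ) • M := by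
  ext i j
  simp [Complex.real_smul]

lemma Dg_one : Dg (fun _ : Fin n => (1:ℝ)) = (1 : Matrix (Fin n) (Fin n) ℂ) := by
  rw [Dg]
  rw [show (fun i : Fin n => (((1:ℝ)) : ℂ)) = fun _ : Fin n => (1:ℂ) from by
    funext i; norm_num]
  exact diagonal_one

lemma one_unitary : (1 : Matrix (Fin n) (Fin n) ℂ) ∈ unitaryGroup (Fin n) ℂ := by
  rw [mem_unitaryGroup_iff]
  simp

lemma wk_one (hk : 1 ≤ k) (hkn : k ≤ n) : wk k (1 : Matrix (Fin n) (Fin n) ℂ) = k := by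
  obtain ⟨s₀, -, hs₀⟩ := Finset.exists_subset_card_eq
    (show k ≤ (Finset.univ : Finset (Fin n)).card from by simpa using hkn)
  have hne : s₀.Nonempty := Finset.card_pos.mp (by rw [hs₀]; exact hk)
  have h := wk_eq (one_unitary (n := n)) (fun _ => (1:ℝ)) s₀ hs₀ hne
    (fun i _ => by norm_num) (fun i _ j _ => by norm_num)
  rw [show (1 : Matrix (Fin n) (Fin n) ℂ) * Dg (fun _ => (1:ℝ)) *
      (1 : Matrix (Fin n) (Fin n) ℂ)ᴴ = 1 from by rw [Dg_one]; simp] at h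
  rw [h, Finset.sum_const, hs₀, nsmul_eq_mul, mul_one]

lemma one_mem_S (hk : 1 ≤ k) (hkn : k ≤ n) {Q : Matrix (Fin n) (Fin n) ℂ}
    (hQ : IsProjOfRank Q k) :
    (1 : Matrix (Fin n) (Fin n) ℂ) ∈
      {B : Matrix (Fin n) (Fin n) ℂ | B.IsHermitian ∧ (B * Q).trace = (wk k B : ℂ)} := by
  refine ⟨isHermitian_one, ?_⟩
  rw [one_mul, trace_eq_rank_of_proj hQ.1 hQ.2.1, hQ.2.2, wk_one hk hkn]
  norm_num

lemma S_subset_span (hk : 1 ≤ k) (hn2k : n = 2*k) {Q : Matrix (Fin n) (Fin n) ℂ}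
    (hQ : IsProjOfRank Q k) (hQ' : IsProjOfRank (1 - Q) k) :
    {B : Matrix (Fin n) (Fin n) ℂ | B.IsHermitian ∧ (B * (1 - Q)).trace = (wk k B : ℂ)} ⊆
      (Submodule.span ℝ
        {B : Matrix (Fin n) (Fin n) ℂ | B.IsHermitian ∧ (B * Q).trace = (wk k B : ℂ)} : Set _) := by
  have hkn : k ≤ n := by omega
  rintro B ⟨hB, htr⟩
  set U : Matrix (Fin n) (Fin n) ℂ := (hB.eigenvectorUnitary : Matrix (Fin n) (Fin n) ℂ)
    with hU
  have hUu : U ∈ unitaryGroup (Fin n) ℂ := (hB.eigenvectorUnitary).2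
  set lam := hB.eigenvalues with hlam
  have hBspec : B = U * Dg lam * Uᴴ := spectral hB
  obtain ⟨s, hsk, hdom⟩ := exists_topk (k := k) lam hkn
  have hsne : s.Nonempty := Finset.card_pos.mp (by rw [hsk]; exact hk)
  obtain ⟨i₀, hi₀, hmin⟩ := Finset.exists_min_image s lam hsne
  set c : Fin n → ℝ := fun i => ((Uᴴ * (1 - Q) * U) i i).re with hc
  obtain ⟨hsym, hdiag, h01, hsum, hMi⟩ := proj_compression hUu hQ'
  have htr' : ∑ i, lam i * c i = wk k B := by
    have htrc : ((∑ i, lam i * c i : ℝ) : ℂ) = ((wk k B : ℝ) : ℂ) := by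
      rw [← trace_conj_mul_proj hUu hQ' lam, ← hBspec]; exact htr
    exact_mod_cast htrc
  have hge : ∑ i ∈ s, lam i ≤ wk k B := by
    have hproj : IsProjOfRank (U * Dg (indic s) * Uᴴ) k := by
      rw [← hsk]; exact isProjOfRank_conj hUu s
    have hval : ((B * (U * Dg (indic s) * Uᴴ)).trace) = ((∑ i ∈ s, lam i : ℝ) : ℂ) := by
      rw [hBspec, trace_conj_mul_conj hUu, sum_mul_indic]
    have habs : ‖(B * (U * Dg (indic s) * Uᴴ)).trace‖ = |∑ i ∈ s, lam i| := by
      rw [hval, Complex.norm_real, Real.norm_eq_abs]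
    have hbdd : BddAbove {r : ℝ | ∃ P : Matrix (Fin n) (Fin n) ℂ,
        IsProjOfRank P k ∧ r = ‖(B * P).trace‖} := by
      rw [hBspec]
      exact wk_set_bddAbove hUu lam
    exact le_trans (le_abs_self _) (le_csSup hbdd ⟨_, hproj, habs.symm⟩)
  have hcs : ∑ i, c i = s.card := by rw [hsk]; exact hsum
  have hub : ∑ i, lam i * c i ≤ ∑ i ∈ s, lam i :=
    lp_upper lam c s (lam i₀) (fun i => (h01 i).1) (fun i => (h01 i).2) hcs hmin
      (fun j hj => hdom i₀ hi₀ j hj)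
  have hwkB : wk k B = ∑ i ∈ s, lam i := le_antisymm (by rw [← htr']; exact hub) hge
  -- the shifted matrix
  have hnen : (Finset.univ : Finset (Fin n)).Nonempty := by
    refine ⟨⟨0, by omega⟩, Finset.mem_univ _⟩
  set c₀ : ℝ := Finset.univ.sup' hnen lam with hc₀def
  have hc₀ : ∀ i, lam i ≤ c₀ := fun i => Finset.le_sup' lam (Finset.mem_univ i)
  set d : Fin n → ℝ := fun i => c₀ - lam i with hd
  have hDg : Dg d = (c₀ : ℂ) • 1 - Dg lam := by
    ext i j
    by_cases h : i = j
    · subst h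
      simp only [Dg, diagonal_apply_eq, Matrix.sub_apply, Matrix.smul_apply, one_apply_eq, smul_eq_mul,
        mul_one, hd]
      push_cast
      ring
    · simp only [Dg, diagonal_apply_ne _ h, Matrix.sub_apply, Matrix.smul_apply, one_apply_ne h,
        smul_eq_mul, mul_zero, sub_zero]
  have hC : U * Dg d * Uᴴ = (c₀ : ℂ) • 1 - B := by
    rw [hDg, hBspec]
    rw [mul_sub, sub_mul, mul_smul_comm, smul_mul_assoc, mul_one, hV1 hUu]
  -- trace of C * Q
  have hcompl : sᶜ.card = k := by
    rw [Finset.card_compl, hsk]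
    simp only [Fintype.card_fin]
    omega
  have hsumd : ∑ i ∈ s, d i = k * c₀ - ∑ i ∈ s, lam i := by
    rw [hd]
    rw [Finset.sum_sub_distrib, Finset.sum_const, hsk, nsmul_eq_mul]
  have htr1mQ : ((1 : Matrix (Fin n) (Fin n) ℂ) - Q).trace = (k : ℂ) := by
    rw [trace_eq_rank_of_proj hQ'.1 hQ'.2.1, hQ'.2.2]
  have htrCQ : ((U * Dg d * Uᴴ) * Q).trace = ((∑ i ∈ sᶜ, d i : ℝ) : ℂ) := by
    have hQeq : Q = 1 - (1 - Q) := (sub_sub_cancel 1 Q).symm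
    have step : ((U * Dg d * Uᴴ) * Q).trace
        = (U * Dg d * Uᴴ).trace - (((c₀:ℂ) • 1 - B) * (1 - Q)).trace := by
      conv_lhs => rw [hQeq]
      rw [mul_sub, mul_one, trace_sub, hC]
    rw [step, trace_conj hUu]
    rw [sub_mul, smul_mul_assoc, one_mul, trace_sub, trace_smul, htr1mQ, htr, hwkB]
    rw [smul_eq_mul]
    have hreal : (∑ i, d i) - (c₀ * k - ∑ i ∈ s, lam i) = ∑ i ∈ sᶜ, d i := by
      have h1 := Finset.sum_add_sum_compl s d
      linarith [hsumd]
    rw [← hreal]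
    push_cast
    ring
  have hwkC : wk k (U * Dg d * Uᴴ) = ∑ i ∈ sᶜ, d i := by
    refine wk_eq hUu d sᶜ hcompl (Finset.card_pos.mp (by rw [hcompl]; exact hk)) ?_ ?_
    · intro i _
      exact sub_nonneg.mpr (hc₀ i)
    · intro i hi j hj
      rw [Finset.mem_compl] at hi
      rw [Finset.mem_compl, not_not] at hj
      show |c₀ - lam j| ≤ c₀ - lam i
      rw [abs_of_nonneg (sub_nonneg.mpr (hc₀ j))]
      have := hdom j hj i hi
      linarith
  have hCmem : (U * Dg d * Uᴴ) ∈ {B : Matrix (Fin n) (Fin n) ℂ |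
      B.IsHermitian ∧ (B * Q).trace = (wk k B : ℂ)} :=
    ⟨conj_isHermitian hUu d, by rw [htrCQ, hwkC]⟩
  have h1mem := one_mem_S hk hkn hQ
  have hBeq : B = c₀ • (1 : Matrix (Fin n) (Fin n) ℂ) - (U * Dg d * Uᴴ) := by
    rw [hC, real_smul_mat]
    abel
  rw [hBeq]
  exact Submodule.sub_mem _ (Submodule.smul_mem _ _ (Submodule.subset_span h1mem))
    (Submodule.subset_span hCmem)

lemma conj_comm {U : Matrix (Fin n) (Fin n) ℂ} (hU : U ∈ unitaryGroup (Fin n) ℂ)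
    {X Y : Matrix (Fin n) (Fin n) ℂ} (h : (U * X * Uᴴ) * Y = Y * (U * X * Uᴴ)) :
    X * (Uᴴ * Y * U) = (Uᴴ * Y * U) * X := by
  have h1 : X * (Uᴴ * Y * U) = Uᴴ * ((U * X * Uᴴ) * Y) * U := by
    calc X * (Uᴴ * Y * U) = 1 * X * (Uᴴ * Y * U) := by rw [one_mul]
      _ = (Uᴴ * U) * X * (Uᴴ * Y * U) := by rw [hV2 hU]
      _ = Uᴴ * ((U * X * Uᴴ) * Y) * U := by simp only [mul_assoc]
  have h2 : (Uᴴ * Y * U) * X = Uᴴ * (Y * (U * X * Uᴴ)) * U := by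
    calc (Uᴴ * Y * U) * X = (Uᴴ * Y * U) * X * 1 := by rw [mul_one]
      _ = (Uᴴ * Y * U) * X * (Uᴴ * U) := by rw [hV2 hU]
      _ = Uᴴ * (Y * (U * X * Uᴴ)) * U := by simp only [mul_assoc]
  rw [h1, h2, h]

lemma Dg_sub (a b : Fin n → ℝ) : Dg (fun i => a i - b i) = Dg a - Dg b := by
  ext i j
  by_cases h : i = j
  · subst h
    simp only [Dg, diagonal_apply_eq, Matrix.sub_apply]
    push_cast
    ring
  · simp [Dg, diagonal_apply_ne _ h]

lemma Dg_add (a b : Fin n → ℝ) : Dg (fun i => a i + b i) = Dg a + Dg b := by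
  ext i j
  by_cases h : i = j
  · subst h
    simp only [Dg, diagonal_apply_eq, Matrix.add_apply]
    push_cast
    ring
  · simp [Dg, diagonal_apply_ne _ h]

lemma Dg_eq_sub (a b c : Fin n → ℝ) (h : ∀ i, c i = a i - b i) : Dg c = Dg a - Dg b := by
  rw [show c = fun i => a i - b i from funext h]
  exact Dg_sub a b

lemma Dg_eq_add (a b c : Fin n → ℝ) (h : ∀ i, c i = a i + b i) : Dg c = Dg a + Dg b := by
  rw [show c = fun i => a i + b i from funext h]
  exact Dg_add a b

lemma Dg_apply_eq (d : Fin n → ℝ) (i : Fin n) : Dg d i i = (d i : ℂ) := by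
  rw [Dg, diagonal_apply_eq]

lemma Dg_apply_ne (d : Fin n → ℝ) {i j : Fin n} (h : i ≠ j) : Dg d i j = 0 := by
  rw [Dg, diagonal_apply_ne _ h]

lemma Dg_G {t u : Fin n} (htu : t ≠ u) :
    Dg (fun i => indic {t} i - indic {u} i) = Tm t u 1 0 0 (-1) := by
  have hrw : Tm t u 1 0 0 (-1) = Matrix.single t t 1 + Matrix.single u u (-1) := by
    rw [Tm, single_zero, single_zero]
    abel
  ext i j
  rw [hrw, Matrix.add_apply]
  by_cases hij : i = j
  · subst hij
    rw [Dg_apply_eq]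
    simp only [indic, Finset.mem_singleton]
    by_cases hit : i = t
    · have hiu : ¬ i = u := by rw [hit]; exact htu
      rw [if_pos hit, if_neg hiu]
      rw [show Matrix.single t t (1:ℂ) i i = 1 from by
        rw [hit]; exact Matrix.single_apply_same t t 1]
      rw [show Matrix.single u u (-1:ℂ) i i = 0 from
        Matrix.single_apply_of_row_ne (fun hh => hiu hh.symm) u i (-1)]
      norm_num
    · by_cases hiu : i = u
      · rw [if_neg hit, if_pos hiu]
        rw [show Matrix.single t t (1:ℂ) i i = 0 from
          Matrix.single_apply_of_row_ne (fun hh => hit hh.symm) t i 1]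
        rw [show Matrix.single u u (-1:ℂ) i i = -1 from by
          rw [hiu]; exact Matrix.single_apply_same u u (-1)]
        norm_num
      · rw [if_neg hit, if_neg hiu]
        rw [show Matrix.single t t (1:ℂ) i i = 0 from
          Matrix.single_apply_of_row_ne (fun hh => hit hh.symm) t i 1]
        rw [show Matrix.single u u (-1:ℂ) i i = 0 from
          Matrix.single_apply_of_row_ne (fun hh => hiu hh.symm) u i (-1)]
        norm_num
  · rw [Dg_apply_ne _ hij]
    have hz : ∀ (aa : Fin n) (cc : ℂ), Matrix.single aa aa cc i j = 0 := by
      intro aa cc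
      by_cases hia : aa = i
      · exact Matrix.single_apply_of_col_ne aa i
          (fun hh => hij ((hia.symm.trans hh).symm ▸ rfl)) cc
      · exact Matrix.single_apply_of_row_ne hia aa j cc
    rw [hz, hz, add_zero]

lemma forward (hk : 1 ≤ k) (hkn : k < n) {P Q : Matrix (Fin n) (Fin n) ℂ}
    (hP : IsProjOfRank P k) (hQ : IsProjOfRank Q k)
    (hsub : {B : Matrix (Fin n) (Fin n) ℂ | B.IsHermitian ∧ (B * P).trace = (wk k B : ℂ)} ⊆
      (Submodule.span ℝ {B : Matrix (Fin n) (Fin n) ℂ |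
        B.IsHermitian ∧ (B * Q).trace = (wk k B : ℂ)} : Set _)) :
    P = Q ∨ (n = 2 * k ∧ P = 1 - Q) := by
  have hkn' : k ≤ n := hkn.le
  have hcomm : ∀ B : Matrix (Fin n) (Fin n) ℂ,
      B ∈ {B : Matrix (Fin n) (Fin n) ℂ | B.IsHermitian ∧ (B * P).trace = (wk k B : ℂ)} →
      B * Q = Q * B := by
    intro B hB
    have hBspan := hsub hB
    let comm : Submodule ℝ (Matrix (Fin n) (Fin n) ℂ) :=
      { carrier := {X | X * Q = Q * X}
        add_mem' := fun {X Y} hX hY => by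
          simp only [Set.mem_setOf_eq] at *
          rw [add_mul, mul_add, hX, hY]
        zero_mem' := by simp
        smul_mem' := fun c X hX => by
          simp only [Set.mem_setOf_eq] at *
          rw [smul_mul_assoc, mul_smul_comm, hX] }
    have hle : Submodule.span ℝ {B : Matrix (Fin n) (Fin n) ℂ |
        B.IsHermitian ∧ (B * Q).trace = (wk k B : ℂ)} ≤ comm := by
      rw [Submodule.span_le]
      intro X hX
      exact commute_of_mem_S hk hkn' hX.1 hQ hX.2
    exact hle hBspan
  have hPh : P.IsHermitian := hP.2.1
  set U : Matrix (Fin n) (Fin n) ℂ := (hPh.eigenvectorUnitary : Matrix (Fin n) (Fin n) ℂ)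
    with hUdef
  have hUu : U ∈ unitaryGroup (Fin n) ℂ := (hPh.eigenvectorUnitary).2
  set ev := hPh.eigenvalues with hevdef
  have hev01 : ∀ i, ev i = 0 ∨ ev i = 1 := eigenvalues_proj hP.1 hPh
  set s : Finset (Fin n) := Finset.univ.filter (fun i => ev i = 1) with hsdef
  have hindic : indic s = ev := by
    funext i
    rw [indic]
    by_cases h : i ∈ s
    · rw [if_pos h]
      exact ((Finset.mem_filter.mp h).2).symm
    · rw [if_neg h]
      rcases hev01 i with h0 | h1
      · exact h0.symm
      · exact absurd (Finset.mem_filter.mpr ⟨Finset.mem_univ i, h1⟩) h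
  have hPs : P = U * Dg (indic s) * Uᴴ := by
    rw [hindic]
    exact spectral hPh
  have hcard : s.card = k := by
    have htrP : P.trace = (k : ℂ) := by rw [trace_eq_rank_of_proj hP.1 hP.2.1, hP.2.2]
    have htrP2 : P.trace = ((s.card : ℝ) : ℂ) := by rw [hPs, trace_conj hUu, sum_indic]
    have hcast : ((s.card : ℝ) : ℂ) = ((k : ℕ) : ℂ) := htrP2.symm.trans htrP
    exact_mod_cast hcast
  have hsne : s.Nonempty := Finset.card_pos.mp (by rw [hcard]; exact hk)
  have hscne : sᶜ.Nonempty := by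
    apply Finset.card_pos.mp
    rw [Finset.card_compl, hcard]
    simp only [Fintype.card_fin]
    omega
  have hmem : ∀ d : Fin n → ℝ, (∀ i ∈ s, 0 ≤ d i) → (∀ i ∈ s, ∀ j, j ∉ s → |d j| ≤ d i) →
      (U * Dg d * Uᴴ) * Q = Q * (U * Dg d * Uᴴ) := by
    intro d h0 hdom
    apply hcomm
    refine ⟨conj_isHermitian hUu d, ?_⟩
    rw [hPs]
    exact mem_S hUu d s hcard hsne h0 hdom
  have hsub2 : ∀ A B : Matrix (Fin n) (Fin n) ℂ, A * Q = Q * A → B * Q = Q * B →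
      (A - B) * Q = Q * (A - B) := by
    intro A B hA hB
    rw [sub_mul, mul_sub, hA, hB]
  -- single diagonal entries commute with Q
  have hXt : ∀ t : Fin n,
      (U * Dg (indic {t}) * Uᴴ) * Q = Q * (U * Dg (indic {t}) * Uᴴ) := by
    intro t
    by_cases hts : t ∈ s
    · have hA := hmem (fun i => 2 * indic s i - indic {t} i)
        (by
          intro i hi
          show (0:ℝ) ≤ 2 * indic s i - indic {t} i
          simp only [indic, Finset.mem_singleton]
          rw [if_pos hi]
          split_ifs <;> norm_num)
        (by
          intro i hi j hj
          show |2 * indic s j - indic {t} j| ≤ 2 * indic s i - indic {t} i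
          simp only [indic, Finset.mem_singleton]
          rw [if_pos hi, if_neg hj]
          split_ifs <;> norm_num)
      have h2P := hmem (fun i => 2 * indic s i)
        (by
          intro i hi
          show (0:ℝ) ≤ 2 * indic s i
          simp only [indic]
          rw [if_pos hi]
          norm_num)
        (by
          intro i hi j hj
          show |2 * indic s j| ≤ 2 * indic s i
          simp only [indic]
          rw [if_pos hi, if_neg hj]
          norm_num)
      have hd := hsub2 _ _ h2P hA
      rw [show U * Dg (fun i => 2 * indic s i) * Uᴴ -
            U * Dg (fun i => 2 * indic s i - indic {t} i) * Uᴴ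
          = U * Dg (indic {t}) * Uᴴ from by
        rw [show Dg (indic {t})
            = Dg (fun i => 2 * indic s i) - Dg (fun i => 2 * indic s i - indic {t} i) from
          Dg_eq_sub _ _ _ (fun i => by ring)]
        rw [mul_sub, sub_mul]] at hd
      exact hd
    · have hA := hmem (fun i => 2 * indic s i + indic {t} i)
        (by
          intro i hi
          show (0:ℝ) ≤ 2 * indic s i + indic {t} i
          simp only [indic, Finset.mem_singleton]
          rw [if_pos hi]
          split_ifs <;> norm_num)
        (by
          intro i hi j hj
          show |2 * indic s j + indic {t} j| ≤ 2 * indic s i + indic {t} i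
          simp only [indic, Finset.mem_singleton]
          rw [if_pos hi, if_neg hj]
          split_ifs <;> norm_num)
      have h2P := hmem (fun i => 2 * indic s i)
        (by
          intro i hi
          show (0:ℝ) ≤ 2 * indic s i
          simp only [indic]
          rw [if_pos hi]
          norm_num)
        (by
          intro i hi j hj
          show |2 * indic s j| ≤ 2 * indic s i
          simp only [indic]
          rw [if_pos hi, if_neg hj]
          norm_num)
      have hd := hsub2 _ _ hA h2P
      rw [show U * Dg (fun i => 2 * indic s i + indic {t} i) * Uᴴ -
            U * Dg (fun i => 2 * indic s i) * Uᴴ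
          = U * Dg (indic {t}) * Uᴴ from by
        rw [show Dg (indic {t})
            = Dg (fun i => 2 * indic s i + indic {t} i) - Dg (fun i => 2 * indic s i) from
          Dg_eq_sub _ _ _ (fun i => by ring)]
        rw [mul_sub, sub_mul]] at hd
      exact hd
  -- Q' is diagonal
  have hQ'diag : ∀ i j : Fin n, i ≠ j → (Uᴴ * Q * U) i j = 0 := by
    intro i j hij
    have h := conj_comm hUu (hXt i)
    have hentry : (Dg (indic {i}) * (Uᴴ * Q * U)) i j
        = ((Uᴴ * Q * U) * Dg (indic {i})) i j := congrArg (fun M => M i j) h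
    have hL : (Dg (indic {i}) * (Uᴴ * Q * U)) i j = (Uᴴ * Q * U) i j := by
      simp [Dg, diagonal_mul, indic]
    have hR : ((Uᴴ * Q * U) * Dg (indic {i})) i j = 0 := by
      simp [Dg, mul_diagonal, indic, Ne.symm hij]
    rw [hL, hR] at hentry
    exact hentry
  -- Q' is constant on blocks
  have hblock : ∀ t u : Fin n, t ≠ u → indic s t = indic s u →
      (Uᴴ * Q * U) t t = (Uᴴ * Q * U) u u := by
    intro t u htu hsu
    have hVu : U * Wm t u ∈ unitaryGroup (Fin n) ℂ := mul_mem hUu (Wm_unitary htu)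
    have hconjV : ∀ X : Matrix (Fin n) (Fin n) ℂ,
        (U * Wm t u) * X * (U * Wm t u)ᴴ = U * (Wm t u * X * (Wm t u)ᴴ) * Uᴴ := by
      intro X
      rw [conjTranspose_mul]
      simp only [mul_assoc]
    have hfs : (fun i => (indic s i : ℂ)) t = (fun i => (indic s i : ℂ)) u := by
      simp only
      exact_mod_cast congrArg (fun x : ℝ => (x : ℂ)) hsu
    have hfs2 : (fun i => ((2 * indic s i : ℝ) : ℂ)) t = (fun i => ((2 * indic s i : ℝ) : ℂ)) u := by
      simp only
      rw [hsu]
    have hPV : P = (U * Wm t u) * Dg (indic s) * (U * Wm t u)ᴴ := by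
      rw [hconjV, show Wm t u * Dg (indic s) * (Wm t u)ᴴ = Dg (indic s) from
        Wm_conj_diag htu (fun i => (indic s i : ℂ)) hfs, ← hPs]
    have h0 : ∀ i ∈ s, (0:ℝ) ≤ 2 * indic s i + indic {t} i - indic {u} i := by
      intro i hi
      simp only [indic, Finset.mem_singleton]
      rw [if_pos hi]
      split_ifs <;> norm_num
    have hdom : ∀ i ∈ s, ∀ j, j ∉ s →
        |2 * indic s j + indic {t} j - indic {u} j| ≤ 2 * indic s i + indic {t} i - indic {u} i := by
      intro i hi j hj
      simp only [indic, Finset.mem_singleton]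
      rw [if_pos hi, if_neg hj]
      split_ifs <;> norm_num
    have hAcomm : ((U * Wm t u) * Dg (fun i => 2 * indic s i + indic {t} i - indic {u} i) *
        (U * Wm t u)ᴴ) * Q = Q * ((U * Wm t u) *
        Dg (fun i => 2 * indic s i + indic {t} i - indic {u} i) * (U * Wm t u)ᴴ) := by
      apply hcomm
      refine ⟨conj_isHermitian hVu _, ?_⟩
      rw [hPV]
      exact mem_S hVu _ s hcard hsne h0 hdom
    have h2P := hmem (fun i => 2 * indic s i)
      (by
        intro i hi
        show (0:ℝ) ≤ 2 * indic s i
        simp only [indic]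
        rw [if_pos hi]
        norm_num)
      (by
        intro i hi j hj
        show |2 * indic s j| ≤ 2 * indic s i
        simp only [indic]
        rw [if_pos hi, if_neg hj]
        norm_num)
    have hdecomp : (U * Wm t u) * Dg (fun i => 2 * indic s i + indic {t} i - indic {u} i) *
        (U * Wm t u)ᴴ - U * Dg (fun i => 2 * indic s i) * Uᴴ = U * Tm t u 0 1 1 0 * Uᴴ := by
      rw [hconjV]
      have hsplit : Dg (fun i => 2 * indic s i + indic {t} i - indic {u} i)
          = Dg (fun i => 2 * indic s i) + Dg (fun i => indic {t} i - indic {u} i) :=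
        Dg_eq_add _ _ _ (fun i => by ring)
      rw [hsplit, Dg_G htu, mul_add, add_mul]
      rw [show Wm t u * Dg (fun i => 2 * indic s i) * (Wm t u)ᴴ
          = Dg (fun i => 2 * indic s i) from Wm_conj_diag htu _ hfs2, Wm_conj_G htu]
      rw [mul_add, add_mul]
      abel
    have hHcomm : (U * Tm t u 0 1 1 0 * Uᴴ) * Q = Q * (U * Tm t u 0 1 1 0 * Uᴴ) := by
      rw [← hdecomp]
      exact hsub2 _ _ hAcomm h2P
    have hQ'H := conj_comm hUu hHcomm
    have hent := congrArg (fun M => M t u) hQ'H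
    have e1 : ∀ (jj : Fin n) (cc : ℂ) (M : Matrix (Fin n) (Fin n) ℂ),
        (Matrix.single u jj cc * M) t u = 0 :=
      fun jj cc M => Matrix.single_mul_apply_of_ne cc u jj t u htu M
    have e2 : ∀ (ii : Fin n) (cc : ℂ) (M : Matrix (Fin n) (Fin n) ℂ),
        (M * Matrix.single ii t cc) t u = 0 :=
      fun ii cc M => Matrix.mul_single_apply_of_ne cc ii t t u htu.symm M
    simp only [Tm, add_mul, mul_add, Matrix.add_apply, Matrix.single_mul_apply_same,
      Matrix.mul_single_apply_same, e1, e2, zero_mul, one_mul, mul_zero, mul_one,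
      add_zero, zero_add] at hent
    exact hent.symm
  -- endgame
  obtain ⟨t₀, ht₀⟩ := hsne
  obtain ⟨u₀, hu₀c⟩ := hscne
  have hu₀s : u₀ ∉ s := Finset.mem_compl.mp hu₀c
  have hQ'eq : Uᴴ * Q * U = diagonal
      (fun i => if i ∈ s then (Uᴴ * Q * U) t₀ t₀ else (Uᴴ * Q * U) u₀ u₀) := by
    ext i j
    by_cases h : i = j
    · subst h
      rw [diagonal_apply_eq]
      by_cases his : i ∈ s
      · rw [if_pos his]
        by_cases hit : i = t₀
        · rw [hit]
        · refine hblock i t₀ hit ?_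
          simp only [indic]
          rw [if_pos his, if_pos ht₀]
      · rw [if_neg his]
        by_cases hiu : i = u₀
        · rw [hiu]
        · refine hblock i u₀ hiu ?_
          simp only [indic]
          rw [if_neg his, if_neg hu₀s]
    · rw [diagonal_apply_ne _ h]
      exact hQ'diag i j h
  obtain ⟨-, -, -, -, hMiQ⟩ := proj_compression hUu hQ
  set a : ℂ := (Uᴴ * Q * U) t₀ t₀ with hadef
  set b : ℂ := (Uᴴ * Q * U) u₀ u₀ with hbdef
  have hQQ : (Uᴴ * Q * U) * (Uᴴ * Q * U) = Uᴴ * Q * U := hMiQ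
  rw [hQ'eq, diagonal_mul_diagonal] at hQQ
  have haa : a * a = a := by
    have h := congrArg (fun M => M t₀ t₀) hQQ
    simp only [diagonal_apply_eq, Pi.mul_apply] at h
    rw [if_pos ht₀] at h
    exact h
  have hbb : b * b = b := by
    have h := congrArg (fun M => M u₀ u₀) hQQ
    simp only [diagonal_apply_eq, Pi.mul_apply] at h
    rw [if_neg hu₀s] at h
    exact h
  have htrQ' : (Uᴴ * Q * U).trace = (k : ℂ) := by
    rw [trace_mul_cycle, hV1 hUu, one_mul, trace_eq_rank_of_proj hQ.1 hQ.2.1, hQ.2.2]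
  have hcompl : sᶜ.card = n - k := by
    rw [Finset.card_compl, hcard]
    simp
  have hkey : (k : ℂ) * a + ((n - k : ℕ) : ℂ) * b = (k : ℂ) := by
    have h := htrQ'
    rw [hQ'eq, trace_diagonal] at h
    rw [← Finset.sum_add_sum_compl s (fun i => if i ∈ s then a else b)] at h
    rw [Finset.sum_congr rfl (fun i hi => if_pos hi),
      Finset.sum_congr rfl (fun i (hi : i ∈ sᶜ) => if_neg (Finset.mem_compl.mp hi)),
      Finset.sum_const, Finset.sum_const, nsmul_eq_mul, nsmul_eq_mul, hcard, hcompl] at h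
    exact h
  have ha01 : a = 0 ∨ a = 1 := by
    rcases mul_eq_zero.mp (show a * (a - 1) = 0 from by
      rw [mul_sub, haa, mul_one, sub_self]) with h | h
    · exact Or.inl h
    · exact Or.inr (by rwa [sub_eq_zero] at h)
  have hb01 : b = 0 ∨ b = 1 := by
    rcases mul_eq_zero.mp (show b * (b - 1) = 0 from by
      rw [mul_sub, hbb, mul_one, sub_self]) with h | h
    · exact Or.inl h
    · exact Or.inr (by rwa [sub_eq_zero] at h)
  have hQU : Q = U * (Uᴴ * Q * U) * Uᴴ := by
    calc Q = (U * Uᴴ) * Q * (U * Uᴴ) := by rw [hV1 hUu, one_mul, mul_one]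
      _ = U * (Uᴴ * Q * U) * Uᴴ := by simp only [mul_assoc]
  rcases ha01 with ha | ha <;> rcases hb01 with hb | hb
  · exfalso
    rw [ha, hb, mul_zero, mul_zero, add_zero] at hkey
    have hcast : (k : ℕ) = 0 := by exact_mod_cast hkey.symm
    omega
  · right
    rw [ha, hb, mul_zero, mul_one, zero_add] at hkey
    have hnk : n - k = k := by exact_mod_cast hkey
    refine ⟨by omega, ?_⟩
    have hQd : Uᴴ * Q * U = 1 - Dg (indic s) := by
      rw [hQ'eq, ha, hb]
      ext i j
      by_cases h : i = j
      · subst h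
        rw [diagonal_apply_eq, Matrix.sub_apply, one_apply_eq, Dg_apply_eq]
        simp only [indic]
        split_ifs <;> norm_num
      · rw [diagonal_apply_ne _ h, Matrix.sub_apply, one_apply_ne h, Dg_apply_ne _ h, sub_zero]
    have hQ1P : Q = 1 - P := by
      rw [hQU, hQd, mul_sub, mul_one, sub_mul, hV1 hUu, ← hPs]
    rw [hQ1P, sub_sub_cancel]
  · left
    have hQd : Uᴴ * Q * U = Dg (indic s) := by
      rw [hQ'eq, ha, hb]
      ext i j
      by_cases h : i = j
      · subst h
        rw [diagonal_apply_eq, Dg_apply_eq]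
        simp only [indic]
        split_ifs <;> norm_num
      · rw [diagonal_apply_ne _ h, Dg_apply_ne _ h]
    rw [hPs, ← hQd, ← hQU]
  · exfalso
    rw [ha, hb, mul_one, mul_one] at hkey
    have h0 : ((n - k : ℕ) : ℂ) = 0 := by
      have h1 := hkey
      rwa [add_eq_left] at h1
    have hnk0 : n - k = 0 := by exact_mod_cast h0
    omega

end Stmt16Aux

/-- for rank-`k` orthogonal projections `P, Q` (Hermitian setting),
`span_ℝ S(P) = span_ℝ S(Q)` iff `P = Q`, or `n = 2k` and `P = I - Q`. -/
theorem stmt_16 (n k : ℕ) (hk : 1 ≤ k) (hkn : k < n)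
    (P Q : Matrix (Fin n) (Fin n) ℂ) (hP : IsProjOfRank P k) (hQ : IsProjOfRank Q k) :
    Submodule.span ℝ
        {B : Matrix (Fin n) (Fin n) ℂ | B.IsHermitian ∧ (B * P).trace = (wk k B : ℂ)}
      = Submodule.span ℝ
        {B : Matrix (Fin n) (Fin n) ℂ | B.IsHermitian ∧ (B * Q).trace = (wk k B : ℂ)}
    ↔ (P = Q ∨ (n = 2 * k ∧ P = 1 - Q)) := by
  constructor
  · intro h
    exact Stmt16Aux.forward hk hkn hP hQ
      (fun B hB => by rw [← h]; exact Submodule.subset_span hB)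
  · rintro (rfl | ⟨hn2k, rfl⟩)
    · rfl
    · have hQ' : IsProjOfRank (1 - Q) k := hP
      apply le_antisymm
      · exact Submodule.span_le.mpr (Stmt16Aux.S_subset_span hk hn2k hQ hQ')
      · have h2 : IsProjOfRank (1 - (1 - Q)) k := by
          rw [sub_sub_cancel]
          exact hQ
        have h3 := Stmt16Aux.S_subset_span hk hn2k hQ' h2
        rw [sub_sub_cancel] at h3
        exact Submodule.span_le.mpr h3
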